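/- arXiv:1310.5396 — 2 statements merged into one kernel-verified Lean document; each statement's English description precedes it below -/
import Mathlib

section
/- For a finite tree T, define Y_ℓ(T) = Σ over edges {u,v} of T with max(d(u), d(v)) ≥ 4 of [ C(d(v)−1, 2)·(d(u)−1) + C(d(u)−1, 2)·(d(v)−1) ], where d denotes vertex degree. Then Y_ℓ(T) ≤ 36 S(T). -/
open SimpleGraph Finset

/-- The number of copies of `S` in `T`: the number of vertex subsets of `T` whose induced
subgraph is connected and isomorphic to `S`. -/
noncomputable def copyCount {α V : Type*} [Fintype V] (S : SimpleGraph α) (T : SimpleGraph V) : ℕ :=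
  Set.ncard {s : Finset V |
    (T.induce (s : Set V)).Connected ∧ Nonempty (T.induce (s : Set V) ≃g S)}

/-- The star on `k` vertices, centered at the vertex `0`. -/
def starGraph (k : ℕ) : SimpleGraph (Fin k) where
  Adj a b := a ≠ b ∧ ((a : ℕ) = 0 ∨ (b : ℕ) = 0)
  symm := ⟨fun _ _ h => ⟨h.1.symm, h.2.symm⟩⟩
  loopless := ⟨fun _ h => h.1 rfl⟩

lemma acyclic_triangle_free {V : Type*} (T : SimpleGraph V) (hT : T.IsAcyclic)
    {a b c : V} (hab : T.Adj a b) (hbc : T.Adj b c) (hac : T.Adj a c) : False := by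
  have h1 : a ≠ b := hab.ne
  have h2 : b ≠ c := hbc.ne
  have h3 : a ≠ c := hac.ne
  apply hT (.cons hab (.cons hbc (.cons hac.symm .nil)))
  simp [Walk.isCycle_def, Walk.isTrail_def, h1, h2, h3, h1.symm, h2.symm, h3.symm,
    Sym2.eq_iff, List.Nodup]

lemma sum_edge_lift {V : Type*} [Fintype V] [DecidableEq V] (G : SimpleGraph V)
    [DecidableRel G.Adj] (h : V → ℚ) :
    ∑ e ∈ G.edgeFinset, Sym2.lift ⟨fun u v => h u + h v, fun u v => by ring⟩ e
      = ∑ v, (G.degree v : ℚ) * h v := by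
  have key : ∑ d : G.Dart, h d.fst
      = ∑ e ∈ G.edgeFinset, Sym2.lift ⟨fun u v => h u + h v, fun u v => by ring⟩ e := by
    rw [← Finset.sum_fiberwise_of_maps_to (g := Dart.edge) (t := G.edgeFinset)
      (fun d _ => by simp [Dart.edge_mem])]
    refine Finset.sum_congr rfl fun e he => ?_
    rw [mem_edgeFinset] at he
    induction' e with u v
    have hd : ({d' : G.Dart | d'.edge = s(u,v)} : Finset _)
        = {(⟨(u,v), he⟩ : G.Dart), (⟨(u,v), he⟩ : G.Dart).symm} := by
      exact (Dart.edge_fiber (⟨(u,v), he⟩ : G.Dart))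
    rw [show (univ.filter fun d : G.Dart => d.edge = s(u,v))
        = ({d' : G.Dart | d'.edge = s(u,v)} : Finset _) from rfl, hd]
    rw [Finset.sum_pair (Dart.symm_ne _).symm]
    simp [Dart.symm]
  have key2 : ∑ d : G.Dart, h d.fst = ∑ v, (G.degree v : ℚ) * h v := by
    rw [← Finset.sum_fiberwise_of_maps_to (g := fun d : G.Dart => d.fst) (t := univ) (fun d _ => mem_univ _)]
    refine Finset.sum_congr rfl fun v _ => ?_
    rw [show (univ.filter fun d : G.Dart => d.fst = v)
        = ({d : G.Dart | d.fst = v} : Finset _) from rfl]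
    rw [show ∑ d ∈ ({d : G.Dart | d.fst = v} : Finset _), h d.fst
        = ∑ _d ∈ ({d : G.Dart | d.fst = v} : Finset _), h v from
      Finset.sum_congr rfl fun d hd => by rw [(mem_filter.mp hd).2]]
    rw [Finset.sum_const, dart_fst_fiber_card_eq_degree, nsmul_eq_mul]
  rw [← key, key2]

lemma c2 (n : ℕ) : 2 * n.choose 2 = n * (n-1) := by
  rw [Nat.choose_eq_descFactorial_div_factorial,
    show (Nat.factorial 2) = 2 from rfl] at *
  rw [Nat.mul_div_cancel' (by simpa using Nat.factorial_dvd_descFactorial n 2)]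
  simp [Nat.descFactorial]; ring
lemma c4 (n : ℕ) : 24 * n.choose 4 = n * (n-1) * (n-2) * (n-3) := by
  rw [Nat.choose_eq_descFactorial_div_factorial,
    show (Nat.factorial 4) = 24 from rfl] at *
  rw [Nat.mul_div_cancel' (by have h := Nat.factorial_dvd_descFactorial n 4; rwa [show Nat.factorial 4 = 24 from rfl] at h)]
  simp [Nat.descFactorial]; ring
lemma c2' (n : ℕ) : 2 * (n+2).choose 2 = (n+2)*(n+1) := by
  have := c2 (n+2); simpa using this
lemma c4' (n : ℕ) : 24 * (n+4).choose 4 = (n+4)*(n+3)*(n+2)*(n+1) := by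
  have := c4 (n+4)
  simpa [show n+4-1 = n+3 by omega, show n+4-2 = n+2 by omega, show n+4-3 = n+1 by omega]
    using this

lemma polyineq (x y : ℕ) : (y+3)*(y+2)*(x+3)+(x+3)*(x+2)*(y+3)
    ≤ 3*((x+3)*(x+2)*(x+1)+(y+3)*(y+2)*(y+1)) := by
  have h : ∀ x y : ℤ, 0 ≤ x → 0 ≤ y → (y+3)*(y+2)*(x+3)+(x+3)*(x+2)*(y+3)
      ≤ 3*((x+3)*(x+2)*(x+1)+(y+3)*(y+2)*(y+1)) := by
    intro x y hx hy
    nlinarith [sq_nonneg (x-y), sq_nonneg (x+y), mul_nonneg hx hy, sq_nonneg x, sq_nonneg y,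
      mul_nonneg (mul_nonneg hx hx) hx, mul_nonneg (mul_nonneg hy hy) hy,
      mul_nonneg (mul_nonneg hx hx) hy, mul_nonneg (mul_nonneg hx hy) hy]
  exact_mod_cast h x y (by positivity) (by positivity)

lemma c2'' (n : ℕ) : 2 * (n+3).choose 2 = (n+3)*(n+2) := by
  have := c2' (n+1); ring_nf at this ⊢; linarith

lemma key_main (a b : ℕ) (hb : 1 ≤ b) (hba : b ≤ a) (ha4 : 4 ≤ a) :
    a * b * ((b-1).choose 2 * (a-1) + (a-1).choose 2 * (b-1))
      ≤ 36 * (b * a.choose 4 + a * b.choose 4) := by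
  obtain ⟨x, rfl⟩ : ∃ x, a = x + 4 := ⟨a - 4, by omega⟩
  have hx1 : x + 4 - 1 = x + 3 := by omega
  have h2x := c2'' x
  have h4x := c4' x
  rcases Nat.lt_or_ge b 4 with h | h
  · interval_cases b
    · simp
    · simp only [hx1, show (2:ℕ)-1 = 1 by rfl, show Nat.choose 1 2 = 0 from rfl,
        show Nat.choose 2 4 = 0 by decide]
      nlinarith [h2x, h4x, x.zero_le, sq_nonneg x]
    · simp only [hx1, show (3:ℕ)-1 = 2 by rfl, show Nat.choose 2 2 = 1 from rfl,
        show Nat.choose 3 4 = 0 by decide]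
      nlinarith [h2x, h4x, x.zero_le, sq_nonneg x]
  · obtain ⟨y, rfl⟩ : ∃ y, b = y + 4 := ⟨b - 4, by omega⟩
    have hy1 : y + 4 - 1 = y + 3 := by omega
    have h2y := c2'' y
    have h4y := c4' y
    have hp := polyineq x y
    simp only [hx1, hy1]
    apply Nat.le_of_mul_le_mul_left _ (show 0 < 48 by norm_num)
    calc 48*((x+4)*(y+4)*((y+3).choose 2*(x+3)+(x+3).choose 2*(y+3)))
        = 24*((x+4)*(y+4)*((2*(y+3).choose 2)*(x+3)+(2*(x+3).choose 2)*(y+3))) := by ring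
      _ = 24*((x+4)*(y+4)*(((y+3)*(y+2))*(x+3)+((x+3)*(x+2))*(y+3))) := by rw [h2x, h2y]
      _ ≤ 24*((x+4)*(y+4)*(3*((x+3)*(x+2)*(x+1)+(y+3)*(y+2)*(y+1)))) :=
          Nat.mul_le_mul_left _ (Nat.mul_le_mul_left _ hp)
      _ = 72*((y+4)*((x+4)*(x+3)*(x+2)*(x+1)) + (x+4)*((y+4)*(y+3)*(y+2)*(y+1))) := by ring
      _ = 72*((y+4)*(24*(x+4).choose 4) + (x+4)*(24*(y+4).choose 4)) := by rw [h4x, h4y]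
      _ = 48*(36*((y+4)*(x+4).choose 4+(x+4)*(y+4).choose 4)) := by ring

lemma key (a b : ℕ) (ha : 1 ≤ a) (hb : 1 ≤ b) (hm : 4 ≤ max a b) :
    a * b * ((b-1).choose 2 * (a-1) + (a-1).choose 2 * (b-1))
      ≤ 36 * (b * a.choose 4 + a * b.choose 4) := by
  rcases le_total b a with h | h
  · exact key_main a b hb h (by omega)
  · calc a * b * ((b-1).choose 2 * (a-1) + (a-1).choose 2 * (b-1))
        = b * a * ((a-1).choose 2 * (b-1) + (b-1).choose 2 * (a-1)) := by ring
      _ ≤ 36 * (a * b.choose 4 + b * a.choose 4) := key_main b a ha h (by omega)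
      _ = 36 * (b * a.choose 4 + a * b.choose 4) := by ring

lemma edge_bound (a b : ℕ) (ha : 1 ≤ a) (hb : 1 ≤ b) :
    ((if 4 ≤ max a b then (b-1).choose 2 * (a-1) + (a-1).choose 2 * (b-1) else 0 : ℕ) : ℚ)
      ≤ 36*(a.choose 4)/a + 36*(b.choose 4)/b := by
  have ha' : (0:ℚ) < a := by exact_mod_cast ha
  have hb' : (0:ℚ) < b := by exact_mod_cast hb
  split_ifs with hm
  · have hk := key a b ha hb hm
    have hk' : (a:ℚ) * b * ((b-1).choose 2 * (a-1) + (a-1).choose 2 * (b-1))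
        ≤ 36 * (b * a.choose 4 + a * b.choose 4) := by exact_mod_cast hk
    rw [div_add_div _ _ (ne_of_gt ha') (ne_of_gt hb'), le_div_iff₀ (by positivity)]
    calc (((b-1).choose 2 * (a-1) + (a-1).choose 2 * (b-1) : ℕ) : ℚ) * ((a:ℚ)*b)
        = ((a:ℚ) * b) * (((b-1).choose 2:ℚ) * ((a-1:ℕ):ℚ) + ((a-1).choose 2:ℚ) * ((b-1:ℕ):ℚ)) := by
          push_cast; ring
      _ ≤ 36 * ((b:ℚ) * a.choose 4 + (a:ℚ) * b.choose 4) := by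
          exact_mod_cast hk
      _ = 36 * ((a.choose 4:ℚ)) * b + (a:ℚ) * (36 * (b.choose 4:ℚ)) := by ring
  · positivity

lemma star_copy_mem {V : Type*} [Fintype V] [DecidableEq V] (T : SimpleGraph V)
    [DecidableRel T.Adj]
    (htf : ∀ {a b c : V}, T.Adj a b → T.Adj b c → T.Adj a c → False)
    (v : V) (t : Finset V) (ht : t ⊆ T.neighborFinset v) (hc : t.card = 4) :
    (T.induce ((insert v t : Finset V) : Set V)).Connected ∧
      Nonempty (T.induce ((insert v t : Finset V) : Set V) ≃g _root_.starGraph 5) := by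
  have hvt : v ∉ t := fun h => T.irrefl (show T.Adj v v by simpa using ht h)
  have hadjt : ∀ x ∈ t, T.Adj v x := fun x hx => by simpa using ht hx
  have hvmem : v ∈ ((insert v t : Finset V) : Set V) := by simp
  -- adjacency characterization
  have adj_iff : ∀ x y : V, x ∈ insert v t → y ∈ insert v t →
      (T.Adj x y ↔ (x ≠ y ∧ (x = v ∨ y = v))) := by
    intro x y hx hy
    constructor
    · intro hxy
      refine ⟨hxy.ne, ?_⟩
      by_contra hcon
      push_neg at hcon
      obtain ⟨hxv, hyv⟩ := hcon
      have hxT : x ∈ t := by rcases mem_insert.mp hx with h | h; exact absurd h hxv; exact h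
      have hyT : y ∈ t := by rcases mem_insert.mp hy with h | h; exact absurd h hyv; exact h
      exact htf (hadjt x hxT) hxy (hadjt y hyT)
    · rintro ⟨hne, hv | hv⟩
      · subst hv
        have : y ∈ t := by rcases mem_insert.mp hy with h | h; exact absurd h.symm hne; exact h
        exact hadjt y this
      · subst hv
        have : x ∈ t := by rcases mem_insert.mp hx with h | h; exact absurd h hne; exact h
        exact (hadjt x this).symm
  -- the equivalence
  have et : ↥t ≃ Fin 4 := t.equivFinOfCardEq hc
  let f : ((insert v t : Finset V) : Set V) → Fin 5 := fun x =>
    if h : (x : V) = v then 0 else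
      Fin.succ (et ⟨(x : V), by
        have := x.2
        simp only [Finset.coe_insert, Set.mem_insert_iff, Finset.mem_coe] at this
        tauto⟩)
  let g : Fin 5 → ((insert v t : Finset V) : Set V) := fun i =>
    Fin.cases ⟨v, hvmem⟩ (fun j => ⟨(et.symm j : V), by
      simp only [Finset.coe_insert, Set.mem_insert_iff, Finset.mem_coe]
      exact Or.inr (et.symm j).2⟩) i
  have hfg : ∀ x, g (f x) = x := by
    intro x
    by_cases h : (x : V) = v
    · simp only [f, dif_pos h, g, Fin.cases_zero]
      exact Subtype.ext h.symm
    · simp only [f, dif_neg h, g, Fin.cases_succ]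
      exact Subtype.ext (by rw [Equiv.symm_apply_apply])
  have hgf : ∀ i, f (g i) = i := by
    intro i
    induction i using Fin.cases with
    | zero => simp only [g, Fin.cases_zero, f, dif_pos rfl]
    | succ j =>
      have hne : ((et.symm j : V)) ≠ v := fun h => hvt (h ▸ (et.symm j).2)
      simp only [g, Fin.cases_succ, f, dif_neg hne]
      congr 1
      convert et.apply_symm_apply j using 2
  let e : ((insert v t : Finset V) : Set V) ≃ Fin 5 := ⟨f, g, hfg, hgf⟩
  have he0 : ∀ x, e x = 0 ↔ (x : V) = v := by
    intro x
    constructor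
    · intro h
      by_contra hx
      simp only [e, Equiv.coe_fn_mk, f, dif_neg hx] at h
      exact (Fin.succ_ne_zero _) h
    · intro h
      simp only [e, Equiv.coe_fn_mk, f, dif_pos h]
  have key : ∀ x y : ((insert v t : Finset V) : Set V),
      (T.induce ((insert v t : Finset V) : Set V)).Adj x y ↔ (_root_.starGraph 5).Adj (e x) (e y) := by
    intro x y
    have hx : (x : V) ∈ insert v t := by
      have := x.2; simpa using this
    have hy : (y : V) ∈ insert v t := by
      have := y.2; simpa using this
    show T.Adj (x : V) (y : V) ↔ _
    rw [adj_iff _ _ hx hy]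
    show _ ↔ (e x ≠ e y ∧ ((e x : ℕ) = 0 ∨ (e y : ℕ) = 0))
    have hval : ∀ i : Fin 5, (i : ℕ) = 0 ↔ i = 0 := fun i => by omega
    rw [hval, hval, he0, he0]
    constructor
    · rintro ⟨hne, h⟩
      exact ⟨fun hexy => hne (Subtype.ext_iff.mp (e.injective hexy)), h⟩
    · rintro ⟨hne, h⟩
      exact ⟨fun hxy => hne (congrArg e (Subtype.ext hxy)), h⟩
  constructor
  · rw [connected_iff]
    refine ⟨?_, ⟨⟨v, hvmem⟩⟩⟩
    have reach : ∀ z : ((insert v t : Finset V) : Set V),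
        (T.induce ((insert v t : Finset V) : Set V)).Reachable ⟨v, hvmem⟩ z := by
      intro z
      by_cases h : (z : V) = v
      · rw [show z = ⟨v, hvmem⟩ from Subtype.ext h]
      · have hz : (z : V) ∈ t := by
          have := z.2
          simp only [Finset.coe_insert, Set.mem_insert_iff, Finset.mem_coe] at this
          tauto
        exact (SimpleGraph.Adj.reachable (show T.Adj v (z:V) from hadjt _ hz))
    exact fun x y => (reach x).symm.trans (reach y)
  · exact ⟨⟨e, fun {x y} => (key _ _).symm⟩⟩

lemma star_count {V : Type*} [Fintype V] [DecidableEq V] (T : SimpleGraph V)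
    [DecidableRel T.Adj]
    (htf : ∀ {a b c : V}, T.Adj a b → T.Adj b c → T.Adj a c → False) :
    ∑ v, (T.degree v).choose 4 ≤ _root_.copyCount (_root_.starGraph 5) T := by
  classical
  set P : Set (Finset V) := {s : Finset V |
    (T.induce (s : Set V)).Connected ∧ Nonempty (T.induce (s : Set V) ≃g _root_.starGraph 5)} with hP
  let F : Finset (Finset V) :=
    univ.biUnion fun v => ((T.neighborFinset v).powersetCard 4).image (insert v)
  -- auxiliary: members of the image decompose
  have hdecomp : ∀ v : V, ∀ s ∈ ((T.neighborFinset v).powersetCard 4).image (insert v),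
      ∃ t, t ⊆ T.neighborFinset v ∧ t.card = 4 ∧ s = insert v t := by
    intro v s hs
    obtain ⟨t, ht, rfl⟩ := mem_image.mp hs
    rw [mem_powersetCard] at ht
    exact ⟨t, ht.1, ht.2, rfl⟩
  have hvnott : ∀ v : V, ∀ t : Finset V, t ⊆ T.neighborFinset v → v ∉ t := by
    intro v t ht h
    exact T.irrefl (show T.Adj v v by simpa using ht h)
  -- disjointness of the images for distinct centers
  have hdisj : ∀ v ∈ (univ : Finset V), ∀ w ∈ (univ : Finset V), v ≠ w →
      Disjoint (((T.neighborFinset v).powersetCard 4).image (insert v))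
        (((T.neighborFinset w).powersetCard 4).image (insert w)) := by
    intro v _ w _ hvw
    rw [Finset.disjoint_left]
    intro s hsv hsw
    obtain ⟨t, ht, htc, rfl⟩ := hdecomp v s hsv
    obtain ⟨t', ht', htc', heq⟩ := hdecomp w _ hsw
    have hwt : w ∈ t := by
      have : w ∈ insert v t := heq ▸ mem_insert_self w t'
      rcases mem_insert.mp this with h | h
      · exact absurd h.symm hvw
      · exact h
    have hvt' : v ∈ t' := by
      have : v ∈ insert w t' := heq ▸ mem_insert_self v t
      rcases mem_insert.mp this with h | h
      · exact absurd h hvw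
      · exact h
    -- pick z ∈ t with z ≠ w
    obtain ⟨z, hz⟩ : (t.erase w).Nonempty := by
      rw [← card_pos]
      have := card_erase_of_mem hwt
      omega
    have hzt : z ∈ t := mem_of_mem_erase hz
    have hzw : z ≠ w := ne_of_mem_erase hz
    have hzt' : z ∈ t' := by
      have hz2 : z ∈ insert w t' := by rw [← heq]; exact mem_insert_of_mem hzt
      rcases mem_insert.mp hz2 with h | h
      · exact absurd h hzw
      · exact h
    exact htf (show T.Adj v z by simpa using ht hzt)
      ((show T.Adj w z by simpa using ht' hzt').symm)
      ((show T.Adj w v by simpa using ht' hvt').symm)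
  have hcard : F.card = ∑ v, (T.degree v).choose 4 := by
    rw [card_biUnion hdisj]
    refine Finset.sum_congr rfl fun v _ => ?_
    rw [card_image_of_injOn, card_powersetCard, card_neighborFinset_eq_degree]
    intro t1 h1 t2 h2 h12
    rw [mem_coe, mem_powersetCard] at h1 h2
    have hv1 : v ∉ t1 := hvnott v t1 h1.1
    have hv2 : v ∉ t2 := hvnott v t2 h2.1
    rw [← erase_insert hv1, ← erase_insert hv2, h12]
  have hsub : F ⊆ (Set.toFinite P).toFinset := by
    intro s hs
    rw [Set.Finite.mem_toFinset]
    obtain ⟨v, _, hsv⟩ := Finset.mem_biUnion.mp hs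
    obtain ⟨t, ht, htc, rfl⟩ := hdecomp v s hsv
    exact star_copy_mem T htf v t ht htc
  calc ∑ v, (T.degree v).choose 4 = F.card := hcard.symm
    _ ≤ (Set.toFinite P).toFinset.card := Finset.card_le_card hsub
    _ = P.ncard := (Set.ncard_eq_toFinset_card P (Set.toFinite P)).symm
    _ = _root_.copyCount (_root_.starGraph 5) T := rfl

/-- `Y_ℓ`, the part of the degree-sum formula for `Y` coming from edges with an endpoint of
degree at least 4, satisfies `Y_ℓ ≤ 36 S`. -/
theorem Y_large_le_star {V : Type*} [Fintype V] [DecidableEq V] (T : SimpleGraph V)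
    [DecidableRel T.Adj] (hT : T.IsTree) :
    (∑ e ∈ T.edgeFinset, Sym2.lift
      ⟨fun u v => if 4 ≤ max (T.degree u) (T.degree v) then
          (T.degree v - 1).choose 2 * (T.degree u - 1)
            + (T.degree u - 1).choose 2 * (T.degree v - 1)
        else 0,
        fun u v => by simp only []; rw [max_comm (T.degree u), add_comm]⟩ e)
      ≤ 36 * _root_.copyCount (_root_.starGraph 5) T := by
  classical
  have htf : ∀ {a b c : V}, T.Adj a b → T.Adj b c → T.Adj a c → False :=
    fun hab hbc hac => acyclic_triangle_free T hT.IsAcyclic hab hbc hac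
  set g : V → ℚ := fun w => 36 * ((T.degree w).choose 4 : ℚ) / (T.degree w) with hg
  have step1 : ((∑ e ∈ T.edgeFinset, Sym2.lift
      ⟨fun u v => if 4 ≤ max (T.degree u) (T.degree v) then
          (T.degree v - 1).choose 2 * (T.degree u - 1)
            + (T.degree u - 1).choose 2 * (T.degree v - 1)
        else 0,
        fun u v => by simp only []; rw [max_comm (T.degree u), add_comm]⟩ e : ℕ) : ℚ)
      ≤ ∑ e ∈ T.edgeFinset, Sym2.lift ⟨fun u v => g u + g v, fun u v => by ring⟩ e := by
    push_cast
    refine Finset.sum_le_sum fun e he => ?_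
    induction e with
    | _ u v =>
      rw [mem_edgeFinset, mem_edgeSet] at he
      have hu : 1 ≤ T.degree u := T.degree_pos_iff_exists_adj u |>.mpr ⟨v, he⟩
      have hv : 1 ≤ T.degree v := T.degree_pos_iff_exists_adj v |>.mpr ⟨u, he.symm⟩
      simp only [Sym2.lift_mk, hg]
      exact_mod_cast edge_bound (T.degree u) (T.degree v) hu hv
  have step2 : ∑ e ∈ T.edgeFinset, Sym2.lift ⟨fun u v => g u + g v, fun u v => by ring⟩ e
      = ∑ v, (T.degree v : ℚ) * g v := sum_edge_lift T g
  have step3 : ∑ v, (T.degree v : ℚ) * g v = ∑ v, 36 * ((T.degree v).choose 4 : ℚ) := by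
    refine Finset.sum_congr rfl fun v _ => ?_
    by_cases h : T.degree v = 0
    · simp [hg, h]
    · have : (T.degree v : ℚ) ≠ 0 := Nat.cast_ne_zero.mpr h
      rw [hg]
      field_simp
  have step4 : (∑ v, 36 * ((T.degree v).choose 4 : ℚ))
      ≤ (36 * _root_.copyCount (_root_.starGraph 5) T : ℚ) := by
    rw [← Finset.mul_sum]
    have h := star_count T htf
    have : (∑ v, ((T.degree v).choose 4 : ℚ)) = ((∑ v, (T.degree v).choose 4 : ℕ) : ℚ) := by
      push_cast; rfl
    rw [this]
    have := Nat.mul_le_mul_left 36 h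
    exact_mod_cast this
  have := (step1.trans (le_of_eq step2)).trans ((le_of_eq step3).trans step4)
  exact_mod_cast this
end

section
/- Let k ≥ 6 be even and let T_n be the (k−4)-millipede of length n, with n ≥ 2. Then S_k(T_n) = 0, P_k(T_n) ≤ n(k−3)^2, and Z_k(T_n) ≥ (n−2)·(3/2)^{k/2}. -/
open SimpleGraph Finset

/-- `Z_k(T)`: the total number of `k`-vertex subtrees of `T`, i.e. the number of `k`-element
vertex subsets of `T` whose induced subgraph is connected. -/
noncomputable def subtreeCount {V : Type*} [Fintype V] (k : ℕ) (T : SimpleGraph V) : ℕ :=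
  Set.ncard {s : Finset V | s.card = k ∧ (T.induce (s : Set V)).Connected}

/-- A `d`-millipede: a tree all of whose non-leaf vertices lie on a single path
and have degree `d + 2`. -/
def IsMillipede {V : Type*} [Fintype V] (G : SimpleGraph V) [DecidableRel G.Adj] (d : ℕ) : Prop :=
  G.IsTree ∧ (∀ v, 1 < G.degree v → G.degree v = d + 2) ∧
    ∃ (x y : V) (p : G.Walk x y), p.IsPath ∧ ∀ v, 1 < G.degree v → v ∈ p.support

/-- The length of a millipede: its number of non-leaf vertices. -/
def millipedeLength {V : Type*} [Fintype V] (G : SimpleGraph V) [DecidableRel G.Adj] : ℕ :=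
  (Finset.univ.filter fun v => 1 < G.degree v).card

set_option linter.unusedSectionVars false
set_option linter.unusedVariables false
set_option maxHeartbeats 1000000

section MillipedeHelpers
variable {V : Type*} [Fintype V] {T : SimpleGraph V} [DecidableRel T.Adj]

lemma two_le_degree_of_adj {v a b : V} (hab : a ≠ b) (ha : T.Adj v a) (hb : T.Adj v b) :
    2 ≤ T.degree v := by
  classical
  have hsub : ({a, b} : Finset V) ⊆ T.neighborFinset v := by
    intro u hu
    rcases Finset.mem_insert.mp hu with rfl | hu
    · simpa [SimpleGraph.mem_neighborFinset] using ha
    · rw [Finset.mem_singleton] at hu; subst hu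
      simpa [SimpleGraph.mem_neighborFinset] using hb
  calc 2 = ({a, b} : Finset V).card := (Finset.card_pair hab).symm
    _ ≤ (T.neighborFinset v).card := Finset.card_le_card hsub
    _ = T.degree v := rfl

lemma interior_two_le_degree {x y v : V} (p : T.Walk x y) (hp : p.IsPath) (hv : v ∈ p.support)
    (hvx : v ≠ x) (hvy : v ≠ y) : 2 ≤ T.degree v := by
  induction p with
  | nil => simp only [Walk.support_nil, List.mem_singleton] at hv; exact absurd hv hvx
  | @cons a b c h q ih =>
    rw [Walk.support_cons, List.mem_cons] at hv
    rcases hv with rfl | hv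
    · exact absurd rfl hvx
    · by_cases hvb : v = b
      · subst hvb
        cases q with
        | nil => exact absurd rfl hvy
        | @cons _ u _ hadj r =>
          refine two_le_degree_of_adj (a := a) (b := u) ?_ h.symm hadj
          intro hau
          have hnd := (Walk.isPath_def _).mp hp
          rw [Walk.support_cons, Walk.support_cons, List.nodup_cons] at hnd
          exact hnd.1 (by
            rw [List.mem_cons]
            exact Or.inr (hau ▸ r.start_mem_support))
      · exact ih hp.of_cons hv hvb hvy

lemma support_eq_map_getVert {x y : V} (p : T.Walk x y) :
    p.support = (List.range (p.length + 1)).map p.getVert := by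
  induction p with
  | nil => simp [show List.range 1 = [0] from rfl]
  | @cons a b c h q ih =>
    have hfun : ((Walk.cons h q).getVert ∘ Nat.succ) = q.getVert := by
      funext j
      simp [Walk.getVert_cons_succ]
    rw [Walk.support_cons, Walk.length_cons, List.range_succ_eq_map, List.map_cons,
      List.map_map, hfun, ← ih, Walk.getVert_zero]

lemma walk_of_chain (z : ℕ → V) (m : ℕ) (hadj : ∀ j, j + 1 ≤ m → T.Adj (z j) (z (j + 1))) :
    ∃ w : T.Walk (z 0) (z m), w.support = (List.range (m + 1)).map z ∧
      ∀ e ∈ w.edges, ∃ t, t + 1 ≤ m ∧ e = s(z t, z (t + 1)) := by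
  induction m with
  | zero => exact ⟨Walk.nil, by simp [show List.range 1 = [0] from rfl], by simp⟩
  | succ m ih =>
    obtain ⟨w, hsupp, hedges⟩ := ih (fun j hj => hadj j (hj.trans (Nat.le_succ m)))
    refine ⟨w.concat (hadj m le_rfl), ?_, ?_⟩
    · have hr : List.range (m + 1 + 1) = List.range (m + 1) ++ [m + 1] := List.range_succ
      rw [Walk.support_concat, hsupp, hr, List.map_append]
      simp
    · intro e he
      rw [Walk.edges_concat, List.concat_eq_append, List.mem_append] at he
      rcases he with he | he
      · obtain ⟨t, ht, rfl⟩ := hedges e he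
        exact ⟨t, ht.trans (Nat.le_succ m), rfl⟩
      · rw [List.mem_singleton] at he
        exact ⟨m, le_rfl, he⟩

lemma run_monotone (z : ℕ → ℕ) (m : ℕ)
    (hstep : ∀ j, j + 2 ≤ m → z (j + 1) = z j + 1 ∨ z j = z (j + 1) + 1)
    (hinj : ∀ a b, a < m → b < m → z a = z b → a = b) :
    (∀ j, j < m → z j = z 0 + j) ∨ (∀ j, j < m → z j + j = z 0) := by
  by_cases hm : m ≤ 1
  · left
    intro j hj
    have : j = 0 := by omega
    subst this; simp
  · push_neg at hm
    have h00 := hstep 0 (by omega)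
    simp only [Nat.zero_add] at h00
    rcases h00 with h0 | h0
    · left
      intro j
      induction j using Nat.strong_induction_on with
      | _ j IH =>
        intro hj
        match j with
        | 0 => simp
        | 1 => omega
        | (j+2) =>
          have e1 := IH (j+1) (by omega) (by omega)
          have e0 := IH j (by omega) (by omega)
          have hs := hstep (j+1) (by omega)
          simp only [show j + 1 + 1 = j + 2 from rfl] at hs
          rcases hs with h | h
          · omega
          · have : z (j+2) = z j := by omega
            have := hinj (j+2) j (by omega) (by omega) this
            omega
    · right
      intro j
      induction j using Nat.strong_induction_on with
      | _ j IH =>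
        intro hj
        match j with
        | 0 => simp
        | 1 => omega
        | (j+2) =>
          have e1 := IH (j+1) (by omega) (by omega)
          have e0 := IH j (by omega) (by omega)
          have hs := hstep (j+1) (by omega)
          simp only [show j + 1 + 1 = j + 2 from rfl] at hs
          rcases hs with h | h
          · have : z (j+2) = z j := by omega
            have := hinj (j+2) j (by omega) (by omega) this
            omega
          · omega

lemma two_pow_le_centralBinom (m : ℕ) : 2 ^ m ≤ Nat.centralBinom m := by
  induction m with
  | zero => simp [Nat.centralBinom]
  | succ m ih =>
    have h := Nat.succ_mul_centralBinom_succ m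
    have h2 : (m + 1) * (2 * Nat.centralBinom m) ≤ (m + 1) * Nat.centralBinom (m + 1) := by
      rw [h]
      have : (m + 1) * (2 * Nat.centralBinom m) = (2 * (m + 1)) * Nat.centralBinom m := by ring
      rw [this]
      exact Nat.mul_le_mul_right _ (by omega)
    have h3 := Nat.le_of_mul_le_mul_left h2 (Nat.succ_pos m)
    calc 2 ^ (m + 1) = 2 * 2 ^ m := by ring
      _ ≤ 2 * Nat.centralBinom m := Nat.mul_le_mul_left _ ih
      _ ≤ Nat.centralBinom (m + 1) := h3


lemma exists_spine_walk {u w : V} (huw : u ≠ w) (hu : 1 < T.degree u) (hw : 1 < T.degree w)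
    {x y : V} (p : T.Walk x y) (hp : p.IsPath) (hall : ∀ v, 1 < T.degree v → v ∈ p.support) :
    ∃ (a b : V) (q : T.Walk a b), q.IsPath ∧ ∀ v, 1 < T.degree v ↔ v ∈ q.support := by
  suffices H : ∀ N (x y : V) (p : T.Walk x y), p.length ≤ N → p.IsPath →
      (∀ v, 1 < T.degree v → v ∈ p.support) →
      ∃ (a b : V) (q : T.Walk a b), q.IsPath ∧ ∀ v, 1 < T.degree v ↔ v ∈ q.support by
    exact H p.length x y p le_rfl hp hall
  intro N
  induction N with
  | zero =>
    intro x y p hlen hp hall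
    exfalso
    have hx := hall u hu
    have hy := hall w hw
    cases p with
    | nil =>
      simp only [Walk.support_nil, List.mem_singleton] at hx hy
      exact huw (hx.trans hy.symm)
    | cons h q => simp at hlen
  | succ N IH =>
    intro x y p hlen hp hall
    by_cases hdx : 1 < T.degree x
    · by_cases hdy : 1 < T.degree y
      · refine ⟨x, y, p, hp, fun v => ⟨hall v, fun hv => ?_⟩⟩
        by_cases hvx : v = x
        · subst hvx; exact hdx
        by_cases hvy : v = y
        · subst hvy; exact hdy
        exact lt_of_lt_of_le one_lt_two (interior_two_le_degree p hp hv hvx hvy)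
      · -- trim from the y end, using p.reverse
        have hnn : ¬ p.reverse.Nil := by
          intro hnil
          have h0 : p.reverse.length = 0 := Walk.nil_iff_length_eq.mp hnil
          rw [Walk.length_reverse] at h0
          have hx := hall u hu
          have hy := hall w hw
          cases p with
          | nil =>
            simp only [Walk.support_nil, List.mem_singleton] at hx hy
            exact huw (hx.trans hy.symm)
          | cons h q => simp at h0
        obtain ⟨c, hadj, q, hq⟩ := Walk.not_nil_iff.mp hnn
        refine IH c x q ?_ ?_ ?_
        · have : p.reverse.length = q.length + 1 := by rw [hq, Walk.length_cons]
          rw [Walk.length_reverse] at this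
          omega
        · have := hp.reverse
          rw [hq] at this
          exact this.of_cons
        · intro v hv
          have hvp : v ∈ p.reverse.support := by
            rw [Walk.support_reverse, List.mem_reverse]
            exact hall v hv
          rw [hq, Walk.support_cons, List.mem_cons] at hvp
          rcases hvp with rfl | hvp
          · exact absurd hv hdy
          · exact hvp
    · -- trim from the x end
      have hnn : ¬ p.Nil := by
        intro hnil
        have h0 : p.length = 0 := Walk.nil_iff_length_eq.mp hnil
        have hx := hall u hu
        have hy := hall w hw
        cases p with
        | nil =>
          simp only [Walk.support_nil, List.mem_singleton] at hx hy
          exact huw (hx.trans hy.symm)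
        | cons h q => simp at h0
      obtain ⟨c, hadj, q, hq⟩ := Walk.not_nil_iff.mp hnn
      refine IH c y q ?_ ?_ ?_
      · have : p.length = q.length + 1 := by rw [hq, Walk.length_cons]
        omega
      · have := hp
        rw [hq] at this
        exact this.of_cons
      · intro v hv
        have hvp : v ∈ p.support := hall v hv
        rw [hq, Walk.support_cons, List.mem_cons] at hvp
        rcases hvp with rfl | hvp
        · exact absurd hv hdx
        · exact hvp


lemma spine_structure (d : ℕ) (hm : IsMillipede T d) (hn2 : 2 ≤ millipedeLength T) :
    ∃ x : ℕ → V,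
      (∀ a b, a < millipedeLength T → b < millipedeLength T → x a = x b → a = b) ∧
      (∀ v, 1 < T.degree v ↔ ∃ i, i < millipedeLength T ∧ x i = v) ∧
      (∀ i, i + 1 < millipedeLength T → T.Adj (x i) (x (i + 1))) ∧
      (∀ a b, a < millipedeLength T → b < millipedeLength T → T.Adj (x a) (x b) →
        b = a + 1 ∨ a = b + 1) := by
  classical
  obtain ⟨u, hu, w, hw, huw⟩ := Finset.one_lt_card.mp (lt_of_lt_of_le one_lt_two hn2)
  rw [Finset.mem_filter] at hu hw
  obtain ⟨x0, y0, p, hp, hall⟩ := hm.2.2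
  obtain ⟨a, b, q, hq, hiff⟩ := exists_spine_walk huw hu.2 hw.2 p hp hall
  have hnodup : q.support.Nodup := (Walk.isPath_def _).mp hq
  have hsupp_eq : q.support = (List.range (q.length + 1)).map q.getVert :=
    support_eq_map_getVert q
  have hn : millipedeLength T = q.length + 1 := by
    unfold millipedeLength
    have hset : (Finset.univ.filter fun v => 1 < T.degree v) = q.support.toFinset := by
      ext v
      simp only [Finset.mem_filter, Finset.mem_univ, true_and, List.mem_toFinset]
      exact hiff v
    rw [hset, List.toFinset_card_of_nodup hnodup, Walk.length_support]
  refine ⟨q.getVert, ?_, ?_, ?_, ?_⟩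
  · -- injectivity
    intro i j hi hj hij
    rw [hn] at hi hj
    have hinj := List.inj_on_of_nodup_map (hsupp_eq ▸ hnodup)
    exact hinj (List.mem_range.mpr hi) (List.mem_range.mpr hj) hij
  · -- spine characterization
    intro v
    rw [hiff v, hsupp_eq, hn]
    simp only [List.mem_map, List.mem_range]
  · -- consecutive adjacency
    intro i hi
    rw [hn] at hi
    exact q.adj_getVert_succ (by omega)
  · -- chord lemma
    have hinj : ∀ i j, i < millipedeLength T → j < millipedeLength T →
        q.getVert i = q.getVert j → i = j := by
      intro i j hi hj hij
      rw [hn] at hi hj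
      exact List.inj_on_of_nodup_map (hsupp_eq ▸ hnodup)
        (List.mem_range.mpr hi) (List.mem_range.mpr hj) hij
    have chord_aux : ∀ i j, i < j → j ≤ q.length → T.Adj (q.getVert i) (q.getVert j) →
        j = i + 1 := by
      intro i j hij hj hadj
      by_contra hne
      have h2 : i + 2 ≤ j := by omega
      have hchain : ∀ t, t + 1 ≤ j - i →
          T.Adj ((fun t => q.getVert (i + t)) t) ((fun t => q.getVert (i + t)) (t + 1)) := by
        intro t ht
        exact q.adj_getVert_succ (by omega)
      obtain ⟨w', hsupp', hedges'⟩ := walk_of_chain (fun t => q.getVert (i + t)) (j - i) hchain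
      have hcopy : i + (j - i) = j := by omega
      let w2 : T.Walk (q.getVert i) (q.getVert j) :=
        w'.copy (by simp) (congrArg q.getVert hcopy)
      have hw2supp : w2.support = (List.range (j - i + 1)).map (fun t => q.getVert (i + t)) := by
        simp only [w2, Walk.support_copy]
        exact hsupp'
      have hw2path : w2.IsPath := by
        rw [Walk.isPath_def, hw2supp]
        refine (List.nodup_map_iff_inj_on List.nodup_range).mpr ?_ --
        intro s hs t ht hst
        have hs' := List.mem_range.mp hs
        have ht' := List.mem_range.mp ht
        have := hinj (i + s) (i + t) (by omega) (by omega) hst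
        omega
      have hnotmem : s(q.getVert j, q.getVert i) ∉ w2.edges := by
        intro hmem
        simp only [w2, Walk.edges_copy] at hmem
        obtain ⟨t, ht, he⟩ := hedges' _ hmem
        rw [Sym2.eq_iff] at he
        rcases he with ⟨h1, h2⟩ | ⟨h1, h2⟩
        · have := hinj j (i + t) (by omega) (by omega) h1
          have := hinj i (i + t + 1) (by omega) (by omega) (by
            convert h2 using 2; omega)
          omega
        · have := hinj j (i + t + 1) (by omega) (by omega) (by
            convert h1 using 2; omega)
          have := hinj i (i + t) (by omega) (by omega) h2
          omega
      have hcycle : (Walk.cons hadj.symm w2).IsCycle :=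
        SimpleGraph.Path.cons_isCycle ⟨w2, hw2path⟩ hadj.symm hnotmem
      exact hm.1.IsAcyclic _ hcycle
    intro i j hi hj hadj
    rcases lt_trichotomy i j with h | h | h
    · left; exact chord_aux i j h (by omega) hadj
    · exact absurd (h ▸ hadj) (T.irrefl)
    · right; exact chord_aux j i h (by omega) hadj.symm


lemma path_copy_structure [DecidableEq V] {k n : ℕ} (hk : 6 ≤ k) (x : ℕ → V)
    (hinj : ∀ a b, a < n → b < n → x a = x b → a = b)
    (hspine : ∀ v, 1 < T.degree v ↔ ∃ i, i < n ∧ x i = v)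
    (hchord : ∀ a b, a < n → b < n → T.Adj (x a) (x b) → b = a + 1 ∨ a = b + 1)
    (s : Finset V) (he : Nonempty (T.induce (s : Set V) ≃g pathGraph k)) :
    ∃ i a b, i + k ≤ n + 2 ∧ a ∈ (T.neighborFinset (x i)).erase (x (i + 1)) ∧
      b ∈ (T.neighborFinset (x (i + k - 3))).erase (x (i + k - 4)) ∧
      ∃ w : T.Walk a b, w.IsPath ∧ w.support.toFinset = s := by
  classical
  obtain ⟨e⟩ := he
  haveI : NeZero k := ⟨by omega⟩
  set u : ℕ → V := fun j => if h : j < k then (e.symm ⟨j, h⟩ : V) else (e.symm ⟨0, by omega⟩ : V)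
    with hu_def
  have hu_eq : ∀ j (h : j < k), u j = (e.symm ⟨j, h⟩ : V) := by
    intro j h
    simp only [hu_def, dif_pos h]
  have hu_mem : ∀ j, j < k → u j ∈ s := by
    intro j hj
    rw [hu_eq j hj]
    exact (e.symm ⟨j, hj⟩).2
  have hu_inj : ∀ a b, a < k → b < k → u a = u b → a = b := by
    intro a b ha hb hab
    rw [hu_eq a ha, hu_eq b hb] at hab
    have h2 := e.symm.toEquiv.injective (Subtype.coe_injective hab)
    simpa using congrArg Fin.val (h2)
  have hu_adj : ∀ j, j + 1 < k → T.Adj (u j) (u (j + 1)) := by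
    intro j hj
    have hpg : (pathGraph k).Adj ⟨j, by omega⟩ ⟨j + 1, hj⟩ := pathGraph_adj.mpr (Or.inl rfl)
    have h2 := e.symm.map_adj_iff.mpr hpg
    have h3 : T.Adj ((e.symm ⟨j, by omega⟩ : V)) ((e.symm ⟨j + 1, hj⟩ : V)) := h2
    rw [hu_eq j (by omega), hu_eq (j + 1) hj]
    exact h3
  have hu_surj : ∀ v, v ∈ s → ∃ j, j < k ∧ u j = v := by
    intro v hv
    refine ⟨(e ⟨v, hv⟩).val, (e ⟨v, hv⟩).isLt, ?_⟩
    rw [hu_eq _ (e ⟨v, hv⟩).isLt]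
    have : (⟨(e ⟨v, hv⟩).val, (e ⟨v, hv⟩).isLt⟩ : Fin k) = e ⟨v, hv⟩ := Fin.eta _ _
    rw [this, RelIso.symm_apply_apply]
  have husp : ∀ j, j + 2 < k → 1 < T.degree (u (j + 1)) := by
    intro j hj
    have h1 := (hu_adj j (by omega)).symm
    have h2 := hu_adj (j + 1) (by omega)
    have hne : u j ≠ u (j + 1 + 1) := fun h => by
      have := hu_inj j (j + 1 + 1) (by omega) (by omega) h
      omega
    have := two_le_degree_of_adj hne h1 h2
    omega
  have hz : ∀ j, j + 3 ≤ k → ∃ i, i < n ∧ x i = u (j + 1) := by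
    intro j hj
    exact (hspine _).mp (husp j (by omega))
  set z : ℕ → ℕ := fun j => if h : ∃ i, i < n ∧ x i = u (j + 1) then h.choose else 0 with hz_def
  have hzlt : ∀ j, j + 3 ≤ k → z j < n ∧ x (z j) = u (j + 1) := by
    intro j hj
    have h := hz j hj
    simp only [hz_def, dif_pos h]
    exact ⟨h.choose_spec.1, h.choose_spec.2⟩
  have hstep : ∀ j, j + 2 ≤ k - 2 → z (j + 1) = z j + 1 ∨ z j = z (j + 1) + 1 := by
    intro j hj
    obtain ⟨ha1, hb1⟩ := hzlt j (by omega)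
    obtain ⟨ha2, hb2⟩ := hzlt (j + 1) (by omega)
    refine hchord _ _ ha1 ha2 ?_
    rw [hb1, hb2]
    exact hu_adj (j + 1) (by omega)
  have hzinj : ∀ a b, a < k - 2 → b < k - 2 → z a = z b → a = b := by
    intro a b ha hb hab
    obtain ⟨-, hb1⟩ := hzlt a (by omega)
    obtain ⟨-, hb2⟩ := hzlt b (by omega)
    have : u (a + 1) = u (b + 1) := by rw [← hb1, ← hb2, hab]
    have := hu_inj (a + 1) (b + 1) (by omega) (by omega) this
    omega
  -- common data
  obtain ⟨w, hwsupp, -⟩ := walk_of_chain u (k - 1) (fun j hj => hu_adj j (by omega))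
  have hwpath : w.IsPath := by
    rw [Walk.isPath_def, hwsupp]
    refine (List.nodup_map_iff_inj_on List.nodup_range).mpr ?_
    intro a ha b hb hab
    exact hu_inj a b (by have := List.mem_range.mp ha; omega)
      (by have := List.mem_range.mp hb; omega) hab
  have hwfin : w.support.toFinset = s := by
    ext v
    rw [List.mem_toFinset, hwsupp, List.mem_map]
    constructor
    · rintro ⟨j, hj, rfl⟩
      exact hu_mem j (by have := List.mem_range.mp hj; omega)
    · intro hv
      obtain ⟨j, hj, rfl⟩ := hu_surj v hv
      exact ⟨j, List.mem_range.mpr (by omega), rfl⟩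
  obtain ⟨hz0lt, hz0⟩ := hzlt 0 (by omega)
  obtain ⟨hz1lt, hz1⟩ := hzlt 1 (by omega)
  obtain ⟨hzk3lt, hzk3⟩ := hzlt (k - 3) (by omega)
  obtain ⟨hzk4lt, hzk4⟩ := hzlt (k - 4) (by omega)
  rw [show k - 3 + 1 = k - 2 by omega] at hzk3
  rw [show k - 4 + 1 = k - 3 by omega] at hzk4
  rcases run_monotone z (k - 2) hstep hzinj with hasc | hdesc
  · -- ascending
    have e1 : z 1 = z 0 + 1 := hasc 1 (by omega)
    have ek3 : z (k - 3) = z 0 + (k - 3) := hasc (k - 3) (by omega)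
    have ek4 : z (k - 4) = z 0 + (k - 4) := hasc (k - 4) (by omega)
    refine ⟨z 0, u 0, u (k - 1), by omega, ?_, ?_, ⟨w, hwpath, hwfin⟩⟩
    · rw [Finset.mem_erase]
      constructor
      · rw [show z 0 + 1 = z 1 by omega, hz1]
        intro h
        have := hu_inj 0 (1 + 1) (by omega) (by omega) h
        omega
      · rw [SimpleGraph.mem_neighborFinset, hz0]
        exact (hu_adj 0 (by omega)).symm
    · rw [Finset.mem_erase]
      constructor
      · rw [show z 0 + k - 4 = z (k - 4) by omega, hzk4]
        intro h
        have := hu_inj (k - 1) (k - 3) (by omega) (by omega) h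
        omega
      · rw [SimpleGraph.mem_neighborFinset, show z 0 + k - 3 = z (k - 3) by omega, hzk3]
        have := hu_adj (k - 2) (by omega)
        rw [show k - 2 + 1 = k - 1 by omega] at this
        exact this
  · -- descending
    have e1 : z 1 + 1 = z 0 := hdesc 1 (by omega)
    have ek3 : z (k - 3) + (k - 3) = z 0 := hdesc (k - 3) (by omega)
    have ek4 : z (k - 4) + (k - 4) = z 0 := hdesc (k - 4) (by omega)
    refine ⟨z (k - 3), u (k - 1), u 0, by omega, ?_, ?_,
      ⟨w.reverse, hwpath.reverse, by rw [Walk.support_reverse, List.toFinset_reverse, hwfin]⟩⟩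
    · rw [Finset.mem_erase]
      constructor
      · rw [show z (k - 3) + 1 = z (k - 4) by omega, hzk4]
        intro h
        have := hu_inj (k - 1) (k - 3) (by omega) (by omega) h
        omega
      · rw [SimpleGraph.mem_neighborFinset, hzk3]
        have := hu_adj (k - 2) (by omega)
        rw [show k - 2 + 1 = k - 1 by omega] at this
        exact this
    · rw [Finset.mem_erase]
      constructor
      · rw [show z (k - 3) + k - 4 = z 1 by omega, hz1]
        intro h
        have := hu_inj 0 (1 + 1) (by omega) (by omega) h
        omega
      · rw [SimpleGraph.mem_neighborFinset, show z (k - 3) + k - 3 = z 0 by omega, hz0]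
        exact (hu_adj 0 (by omega)).symm


lemma subtree_lower {k n : ℕ} (hk : 6 ≤ k) (hn : 2 ≤ n)
    (hlen : (Finset.univ.filter fun v => 1 < T.degree v).card = n)
    (x : ℕ → V)
    (hxinj : ∀ a b, a < n → b < n → x a = x b → a = b)
    (hxspine : ∀ v, 1 < T.degree v ↔ ∃ i, i < n ∧ x i = v)
    (hxadj : ∀ i, i + 1 < n → T.Adj (x i) (x (i + 1)))
    (hxchord : ∀ a b, a < n → b < n → T.Adj (x a) (x b) → b = a + 1 ∨ a = b + 1)
    (hdeg : ∀ t, t < n → T.degree (x t) = k - 2) :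
    (n - 2) * 2 ^ (k - 3) ≤ subtreeCount k T := by
  classical
  set spineF : Finset V := Finset.univ.filter (fun v => 1 < T.degree v) with hspineF
  have hmemspine : ∀ t, t < n → x t ∈ spineF :=
    fun t ht => Finset.mem_filter.mpr ⟨Finset.mem_univ _, (hxspine _).mpr ⟨t, ht, rfl⟩⟩
  set pool : ℕ → Finset V := fun t => T.neighborFinset (x t) \ spineF with hpool
  have hpool_card : ∀ t, t < n → k - 4 ≤ (pool t).card := by
    intro t ht
    have hsub2 : T.neighborFinset (x t) ∩ spineF ⊆ {x (t + 1), x (t - 1)} := by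
      intro v hv
      obtain ⟨hv1, hv2⟩ := Finset.mem_inter.mp hv
      obtain ⟨j, hj, rfl⟩ := (hxspine v).mp (Finset.mem_filter.mp hv2).2
      have hadj : T.Adj (x t) (x j) := by simpa using hv1
      rcases hxchord t j ht hj hadj with h | h
      · have : x j = x (t + 1) := by rw [h]
        rw [this]; exact Finset.mem_insert_self _ _
      · have : x j = x (t - 1) := by congr 1; omega
        rw [this]; exact Finset.mem_insert_of_mem (Finset.mem_singleton_self _)
    have h2 : (T.neighborFinset (x t) ∩ spineF).card ≤ 2 :=
      (Finset.card_le_card hsub2).trans ((Finset.card_insert_le _ _).trans (by simp))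
    have h3 : (T.neighborFinset (x t) ∩ spineF).card + (pool t).card
        = (T.neighborFinset (x t)).card :=
      Finset.card_inter_add_card_sdiff _ _
    have h4 : (T.neighborFinset (x t)).card = k - 2 := hdeg t ht
    omega
  have hpool_nospine : ∀ t, Disjoint (pool t) spineF := fun t => Finset.sdiff_disjoint
  have hpooldis : ∀ a b, a < n → b < n → a ≠ b → Disjoint (pool a) (pool b) := by
    intro a b ha hb hab
    rw [Finset.disjoint_left]
    intro v hva hvb
    have h1 := Finset.mem_sdiff.mp hva
    have h2 := Finset.mem_sdiff.mp hvb
    have ha1 : T.Adj (x a) v := by simpa using h1.1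
    have hb1 : T.Adj (x b) v := by simpa using h2.1
    have hd : 2 ≤ T.degree v :=
      two_le_degree_of_adj (fun h => hab (hxinj a b ha hb h)) ha1.symm hb1.symm
    exact h1.2 (Finset.mem_filter.mpr ⟨Finset.mem_univ _, by omega⟩)
  set triple : ℕ → Finset V := fun i => {x i, x (i + 1), x (i + 2)} with htriple
  set pool3 : ℕ → Finset V := fun i => pool i ∪ pool (i + 1) ∪ pool (i + 2) with hpool3
  have hpool3_nospine : ∀ i, Disjoint (pool3 i) spineF := by
    intro i
    rw [hpool3]
    simp only [Finset.disjoint_union_left]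
    exact ⟨⟨hpool_nospine i, hpool_nospine (i + 1)⟩, hpool_nospine (i + 2)⟩
  have hpool3_card : ∀ i, i + 2 < n → 2 * (k - 3) ≤ (pool3 i).card := by
    intro i hi
    have hd1 : Disjoint (pool i) (pool (i + 1)) := hpooldis _ _ (by omega) (by omega) (by omega)
    have hd2 : Disjoint (pool i ∪ pool (i + 1)) (pool (i + 2)) := by
      rw [Finset.disjoint_union_left]
      exact ⟨hpooldis _ _ (by omega) (by omega) (by omega),
        hpooldis _ _ (by omega) (by omega) (by omega)⟩
    have : (pool3 i).card = (pool i).card + (pool (i + 1)).card + (pool (i + 2)).card := by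
      rw [hpool3]
      rw [Finset.card_union_of_disjoint hd2, Finset.card_union_of_disjoint hd1]
    have p1 := hpool_card i (by omega)
    have p2 := hpool_card (i + 1) (by omega)
    have p3 := hpool_card (i + 2) (by omega)
    omega
  have htriple_spine : ∀ i, i + 2 < n → triple i ⊆ spineF := by
    intro i hi v hv
    rw [htriple] at hv
    simp only [Finset.mem_insert, Finset.mem_singleton] at hv
    rcases hv with rfl | rfl | rfl
    · exact hmemspine i (by omega)
    · exact hmemspine (i + 1) (by omega)
    · exact hmemspine (i + 2) (by omega)
  have htriple_card : ∀ i, i + 2 < n → (triple i).card = 3 := by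
    intro i hi
    rw [htriple]
    rw [Finset.card_insert_of_notMem, Finset.card_insert_of_notMem, Finset.card_singleton]
    · simp only [Finset.mem_singleton]
      intro h
      have := hxinj (i + 1) (i + 2) (by omega) (by omega) h
      omega
    · simp only [Finset.mem_insert, Finset.mem_singleton]
      rintro (h | h)
      · have := hxinj i (i + 1) (by omega) (by omega) h; omega
      · have := hxinj i (i + 2) (by omega) (by omega) h; omega
  set F3 : Finset (Finset V) := (Finset.range (n - 2)).biUnion
    (fun i => ((pool3 i).powersetCard (k - 3)).image (fun L => triple i ∪ L)) with hF3
  -- key recovery fact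
  have hrecover : ∀ i, i + 2 < n → ∀ L ∈ (pool3 i).powersetCard (k - 3),
      (triple i ∪ L) ∩ spineF = triple i ∧ (triple i ∪ L) \ spineF = L := by
    intro i hi L hL
    obtain ⟨hLsub, hLcard⟩ := Finset.mem_powersetCard.mp hL
    have hLno : Disjoint L spineF := Finset.disjoint_of_subset_left hLsub (hpool3_nospine i)
    constructor
    · rw [Finset.union_inter_distrib_right]
      rw [Finset.inter_eq_left.mpr (htriple_spine i hi), Finset.disjoint_iff_inter_eq_empty.mp hLno]
      exact Finset.union_empty _
    · rw [Finset.union_sdiff_distrib]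
      rw [Finset.sdiff_eq_empty_iff_subset.mpr (htriple_spine i hi),
        (Finset.sdiff_eq_self_iff_disjoint).mpr hLno]
      exact Finset.empty_union _
  -- each member is a k-subtree
  have hgood : ∀ S ∈ F3, S.card = k ∧ (T.induce (S : Set V)).Connected := by
    intro S hS
    rw [hF3, Finset.mem_biUnion] at hS
    obtain ⟨i, hi, hS⟩ := hS
    rw [Finset.mem_range] at hi
    obtain ⟨L, hL, rfl⟩ := Finset.mem_image.mp hS
    obtain ⟨hLsub, hLcard⟩ := Finset.mem_powersetCard.mp hL
    have hi2 : i + 2 < n := by omega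
    have hLno : Disjoint L spineF := Finset.disjoint_of_subset_left hLsub (hpool3_nospine i)
    constructor
    · rw [Finset.card_union_of_disjoint (Finset.disjoint_of_subset_left (htriple_spine i hi2)
        hLno.symm), htriple_card i hi2, hLcard]
      omega
    · -- connectivity
      set S := triple i ∪ L with hS_def
      have hhub : x (i + 1) ∈ S := Finset.mem_union_left _ (by
        rw [htriple]; exact Finset.mem_insert_of_mem (Finset.mem_insert_self _ _))
      have hhub' : x (i + 1) ∈ (S : Set V) := hhub
      have hadj_ind : ∀ (a b : V) (ha : a ∈ (S : Set V)) (hb : b ∈ (S : Set V)), T.Adj a b →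
          (T.induce (S : Set V)).Adj ⟨a, ha⟩ ⟨b, hb⟩ := by
        intro a b ha hb hab
        exact hab
      have htr : ∀ t, (t = i ∨ t = i + 1 ∨ t = i + 2) → ∀ (ht : x t ∈ (S : Set V)),
          (T.induce (S : Set V)).Reachable ⟨x t, ht⟩ ⟨x (i + 1), hhub'⟩ := by
        intro t htcase ht
        rcases htcase with rfl | rfl | rfl
        · exact (hadj_ind _ _ _ _ (hxadj t (by omega))).reachable
        · exact Reachable.refl _
        · exact (hadj_ind _ _ _ _ (hxadj (i + 1) (by omega)).symm).reachable
      have hreach : ∀ a (ha : a ∈ (S : Set V)),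
          (T.induce (S : Set V)).Reachable ⟨a, ha⟩ ⟨x (i + 1), hhub'⟩ := by
        intro a ha
        have ha' : a ∈ S := ha
        rcases Finset.mem_union.mp ha' with hat | haL
        · rw [htriple] at hat
          simp only [Finset.mem_insert, Finset.mem_singleton] at hat
          rcases hat with rfl | rfl | rfl
          · exact htr i (Or.inl rfl) ha
          · exact htr (i + 1) (Or.inr (Or.inl rfl)) ha
          · exact htr (i + 2) (Or.inr (Or.inr rfl)) ha
        · have haP : a ∈ pool3 i := hLsub haL
          rw [hpool3] at haP
          have hplan : ∀ t, (t = i ∨ t = i + 1 ∨ t = i + 2) → a ∈ pool t →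
              (T.induce (S : Set V)).Reachable ⟨a, ha⟩ ⟨x (i + 1), hhub'⟩ := by
            intro t htcase hap
            have hxtS : x t ∈ S := Finset.mem_union_left _ (by
              rw [htriple]
              rcases htcase with rfl | rfl | rfl
              · exact Finset.mem_insert_self _ _
              · exact Finset.mem_insert_of_mem (Finset.mem_insert_self _ _)
              · exact Finset.mem_insert_of_mem (Finset.mem_insert_of_mem
                  (Finset.mem_singleton_self _)))
            have hadjat : T.Adj a (x t) := by
              have := (Finset.mem_sdiff.mp hap).1
              exact (by simpa using this : T.Adj (x t) a).symm
            exact ((hadj_ind _ _ ha hxtS hadjat).reachable).trans (htr t htcase hxtS)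
          rcases Finset.mem_union.mp haP with haP' | hap
          · rcases Finset.mem_union.mp haP' with hap | hap
            · exact hplan i (Or.inl rfl) hap
            · exact hplan (i + 1) (Or.inr (Or.inl rfl)) hap
          · exact hplan (i + 2) (Or.inr (Or.inr rfl)) hap
      haveI : Nonempty (S : Set V) := ⟨⟨x (i + 1), hhub'⟩⟩
      exact ⟨fun a b => by
        obtain ⟨a, ha⟩ := a
        obtain ⟨b, hb⟩ := b
        exact (hreach a ha).trans (hreach b hb).symm⟩
  -- cardinality of F3
  have hcardF3 : (n - 2) * 2 ^ (k - 3) ≤ F3.card := by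
    rw [hF3, Finset.card_biUnion]
    · have hterm : ∀ i ∈ Finset.range (n - 2),
          2 ^ (k - 3) ≤ (((pool3 i).powersetCard (k - 3)).image (fun L => triple i ∪ L)).card := by
        intro i hi
        rw [Finset.mem_range] at hi
        have hi2 : i + 2 < n := by omega
        rw [Finset.card_image_of_injOn (by
          intro L1 h1 L2 h2 heq
          have r1 := (hrecover i hi2 L1 (Finset.mem_coe.mp h1)).2
          have r2 := (hrecover i hi2 L2 (Finset.mem_coe.mp h2)).2
          have heq' : triple i ∪ L1 = triple i ∪ L2 := heq
          rw [← r1, ← r2, heq'])]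
        rw [Finset.card_powersetCard]
        calc 2 ^ (k - 3) ≤ Nat.centralBinom (k - 3) := two_pow_le_centralBinom (k - 3)
          _ = (2 * (k - 3)).choose (k - 3) := Nat.centralBinom_eq_two_mul_choose _
          _ ≤ ((pool3 i).card).choose (k - 3) :=
            Nat.choose_le_choose _ (by have := hpool3_card i hi2; omega)
      calc (n - 2) * 2 ^ (k - 3) = ∑ _i ∈ Finset.range (n - 2), 2 ^ (k - 3) := by
            rw [Finset.sum_const, Finset.card_range, smul_eq_mul]
        _ ≤ _ := Finset.sum_le_sum hterm
    · -- pairwise disjoint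
      intro a ha b hb hab
      rw [Finset.mem_coe, Finset.mem_range] at ha hb
      rw [Function.onFun, Finset.disjoint_left]
      intro S hSa hSb
      obtain ⟨L1, hL1, hE1⟩ := Finset.mem_image.mp hSa
      obtain ⟨L2, hL2, hE2⟩ := Finset.mem_image.mp hSb
      have r1 := (hrecover a (by omega) L1 hL1).1
      have r2 := (hrecover b (by omega) L2 hL2).1
      have htt : triple a = triple b := by rw [← r1, ← r2, hE1, hE2]
      have hxa : x a ∈ triple b := by
        rw [← htt, htriple]; exact Finset.mem_insert_self _ _
      have hxb : x b ∈ triple a := by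
        rw [htt, htriple]; exact Finset.mem_insert_self _ _
      rw [htriple] at hxa hxb
      simp only [Finset.mem_insert, Finset.mem_singleton] at hxa hxb
      apply hab
      have e1 : a = b ∨ a = b + 1 ∨ a = b + 2 := by
        rcases hxa with h | h | h
        · exact Or.inl (hxinj a b (by omega) (by omega) h)
        · exact Or.inr (Or.inl (hxinj a (b + 1) (by omega) (by omega) h))
        · exact Or.inr (Or.inr (hxinj a (b + 2) (by omega) (by omega) h))
      have e2 : b = a ∨ b = a + 1 ∨ b = a + 2 := by
        rcases hxb with h | h | h
        · exact Or.inl (hxinj b a (by omega) (by omega) h)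
        · exact Or.inr (Or.inl (hxinj b (a + 1) (by omega) (by omega) h))
        · exact Or.inr (Or.inr (hxinj b (a + 2) (by omega) (by omega) h))
      omega
  -- conclude
  have hsubset : (F3 : Set (Finset V)) ⊆
      {s : Finset V | s.card = k ∧ (T.induce (s : Set V)).Connected} := by
    intro S hS
    exact hgood S (Finset.mem_coe.mp hS)
  calc (n - 2) * 2 ^ (k - 3) ≤ F3.card := hcardF3
    _ = (F3 : Set (Finset V)).ncard := (Set.ncard_coe_finset _).symm
    _ ≤ _ := Set.ncard_le_ncard hsubset (Set.toFinite _)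


end MillipedeHelpers

/-- For even `k ≥ 6`, the `(k-4)`-millipede of length `n ≥ 2` satisfies `S_k = 0`,
`P_k ≤ n (k-3)²` and `Z_k ≥ (n-2)(3/2)^(k/2)`. -/
theorem millipede_counts {V : Type*} [Fintype V] (k n : ℕ) (hk : 6 ≤ k) (hke : Even k)
    (hn : 2 ≤ n) (T : SimpleGraph V) [DecidableRel T.Adj]
    (hm : IsMillipede T (k - 4)) (hlen : millipedeLength T = n) :
    _root_.copyCount (_root_.starGraph k) T = 0 ∧
    _root_.copyCount (SimpleGraph.pathGraph k) T ≤ n * (k - 3) ^ 2 ∧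
    ((n : ℝ) - 2) * (3 / 2) ^ (k / 2) ≤ (subtreeCount k T : ℝ) := by
  classical
  have hn2 : 2 ≤ millipedeLength T := hlen ▸ hn
  obtain ⟨x, hxinj, hxspine, hxadj, hxchord⟩ := spine_structure (k - 4) hm hn2
  rw [hlen] at hxinj hxspine hxadj hxchord
  have hdeg : ∀ t, t < n → T.degree (x t) = k - 2 := by
    intro t ht
    have h1 : 1 < T.degree (x t) := (hxspine (x t)).mpr ⟨t, ht, rfl⟩
    have h2 := hm.2.1 _ h1
    omega
  refine ⟨?_, ?_, ?_⟩
  · -- part 1: no stars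
    unfold _root_.copyCount
    convert Set.ncard_empty (Finset V)
    rw [Set.eq_empty_iff_forall_notMem]
    rintro s ⟨-, ⟨e⟩⟩
    haveI : NeZero k := ⟨by omega⟩
    have hadjv : ∀ j : Fin k, j ≠ 0 → T.Adj (↑(e.symm 0) : V) (↑(e.symm j) : V) := by
      intro j hj
      have hpg : (_root_.starGraph k).Adj 0 j := ⟨Ne.symm hj, Or.inl (by simp)⟩
      exact e.symm.map_adj_iff.mpr hpg
    have hcard : (k - 1 : ℕ) ≤ T.degree (↑(e.symm 0) : V) := by
      have hsub : ((Finset.univ.erase (0 : Fin k)).image fun j => (↑(e.symm j) : V)) ⊆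
          T.neighborFinset (↑(e.symm 0) : V) := by
        intro a ha
        obtain ⟨j, hj, rfl⟩ := Finset.mem_image.mp ha
        rw [SimpleGraph.mem_neighborFinset]
        exact hadjv j (Finset.mem_erase.mp hj).1
      have hcardimg : ((Finset.univ.erase (0 : Fin k)).image fun j => (↑(e.symm j) : V)).card
          = k - 1 := by
        have hinj2 : Set.InjOn (fun j : Fin k => (↑(e.symm j) : V))
            ↑(Finset.univ.erase (0 : Fin k)) :=
          fun a _ b _ hab => e.symm.toEquiv.injective (Subtype.coe_injective hab)
        rw [Finset.card_image_of_injOn hinj2,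
          Finset.card_erase_of_mem (Finset.mem_univ _), Finset.card_univ, Fintype.card_fin]
      calc k - 1 = _ := hcardimg.symm
        _ ≤ (T.neighborFinset _).card := Finset.card_le_card hsub
        _ = T.degree _ := rfl
    by_cases h1 : 1 < T.degree (↑(e.symm 0) : V)
    · have := hm.2.1 _ h1; omega
    · omega
  · -- part 2: paths
    unfold _root_.copyCount
    set A : ℕ → Finset V := fun i => (T.neighborFinset (x i)).erase (x (i + 1)) with hA
    set B : ℕ → Finset V := fun i =>
      (T.neighborFinset (x (i + k - 3))).erase (x (i + k - 4)) with hB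
    set Tgt : Finset (ℕ × V × V) := (Finset.range (n + 3 - k)).biUnion
      (fun i => {i} ×ˢ (A i ×ˢ B i)) with hTgt
    set R : Finset V → ℕ × V × V → Prop := fun s p =>
      p ∈ Tgt ∧ ∃ w : T.Walk p.2.1 p.2.2, w.IsPath ∧ w.support.toFinset = s with hR
    have hex : ∀ s : Finset V, Nonempty (T.induce (s : Set V) ≃g pathGraph k) → ∃ p, R s p := by
      intro s hs
      obtain ⟨i, a, b, hik, hai, hbi, hw⟩ := path_copy_structure hk x hxinj hxspine hxchord s hs
      refine ⟨(i, a, b), ?_, hw⟩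
      rw [hTgt, Finset.mem_biUnion]
      refine ⟨i, Finset.mem_range.mpr (by omega), ?_⟩
      rw [Finset.mem_product, Finset.mem_product]
      exact ⟨Finset.mem_singleton_self _, hai, hbi⟩
    set f : Finset V → ℕ × V × V := fun s => if h : ∃ p, R s p then h.choose else (0, x 0, x 0)
      with hf
    have hle : {s : Finset V | (T.induce (s : Set V)).Connected ∧
        Nonempty (T.induce (s : Set V) ≃g pathGraph k)}.ncard ≤ (Tgt : Set (ℕ × V × V)).ncard := by
      apply Set.ncard_le_ncard_of_injOn f
      · rintro s ⟨-, hs⟩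
        have h := hex s hs
        have : f s = h.choose := by rw [hf]; exact dif_pos h
        rw [this]
        exact h.choose_spec.1
      · rintro s ⟨-, hs⟩ s' ⟨-, hs'⟩ hff
        have h := hex s hs
        have h' := hex s' hs'
        have e1 : f s = h.choose := by rw [hf]; exact dif_pos h
        have e2 : f s' = h'.choose := by rw [hf]; exact dif_pos h'
        have hp : R s (f s) := e1 ▸ h.choose_spec
        have hp' : R s' (f s) := by rw [hff, e2]; exact h'.choose_spec
        obtain ⟨-, w, hwp, hws⟩ := hp
        obtain ⟨-, w', hwp', hws'⟩ := hp'
        have hpaths : (⟨w, hwp⟩ : T.Path _ _) = ⟨w', hwp'⟩ :=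
          hm.1.IsAcyclic.path_unique _ _
        have hww : w = w' := Subtype.ext_iff.mp hpaths
        rw [← hws, ← hws', hww]
    rw [Set.ncard_coe_finset] at hle
    refine hle.trans ?_
    have hterm : ∀ i ∈ Finset.range (n + 3 - k), ({i} ×ˢ (A i ×ˢ B i)).card ≤ (k - 3) ^ 2 := by
      intro i hi
      rw [Finset.mem_range] at hi
      have hAcard : (A i).card = k - 3 := by
        rw [hA]
        rw [Finset.card_erase_of_mem (by
          rw [SimpleGraph.mem_neighborFinset]
          exact hxadj i (by omega))]
        have : (T.neighborFinset (x i)).card = T.degree (x i) := rfl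
        rw [this, hdeg i (by omega)]
        omega
      have hBcard : (B i).card = k - 3 := by
        rw [hB]
        rw [Finset.card_erase_of_mem (by
          rw [SimpleGraph.mem_neighborFinset]
          have := hxadj (i + k - 4) (by omega)
          rw [show i + k - 4 + 1 = i + k - 3 by omega] at this
          exact this.symm)]
        have : (T.neighborFinset (x (i + k - 3))).card = T.degree (x (i + k - 3)) := rfl
        rw [this, hdeg (i + k - 3) (by omega)]
        omega
      rw [Finset.card_product, Finset.card_product, Finset.card_singleton, hAcard, hBcard,
        one_mul, sq]
    calc Tgt.card ≤ ∑ i ∈ Finset.range (n + 3 - k), ({i} ×ˢ (A i ×ˢ B i)).card :=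
          Finset.card_biUnion_le
      _ ≤ ∑ _i ∈ Finset.range (n + 3 - k), (k - 3) ^ 2 := Finset.sum_le_sum hterm
      _ = (n + 3 - k) * (k - 3) ^ 2 := by rw [Finset.sum_const, Finset.card_range, smul_eq_mul]
      _ ≤ n * (k - 3) ^ 2 := Nat.mul_le_mul_right _ (by omega)
  · -- part 3: subtree count
    have hnat : (n - 2) * 2 ^ (k - 3) ≤ subtreeCount k T :=
      subtree_lower hk hn hlen x hxinj hxspine hxadj hxchord hdeg
    have hcast : ((n - 2 : ℕ) : ℝ) * ((2 : ℝ) ^ (k - 3)) ≤ (subtreeCount k T : ℝ) := by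
      exact_mod_cast hnat
    have hn2' : ((n : ℝ) - 2) = ((n - 2 : ℕ) : ℝ) := by
      have : (2 : ℝ) ≤ (n : ℝ) := by exact_mod_cast hn
      push_cast [Nat.cast_sub hn]
      ring
    rw [hn2']
    refine le_trans ?_ hcast
    apply mul_le_mul_of_nonneg_left ?_ (by positivity)
    calc ((3 : ℝ) / 2) ^ (k / 2) ≤ (2 : ℝ) ^ (k / 2) := by
          apply pow_le_pow_left₀ (by norm_num) (by norm_num)
      _ ≤ (2 : ℝ) ^ (k - 3) := by
          apply pow_le_pow_right₀ (by norm_num)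
          omega
end
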